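/- For every γ ∈ (0,2), setting Q = γ/2 + 2/γ, the function Υ(z) = exp( ∫₀^∞ ( (Q/2 − z)² e^{−t} − sinh²((Q/2 − z)t/2) / ( sinh(γt/4) sinh(t/γ) ) ) dt/t ) is holomorphic (complex differentiable) on the open strip { z ∈ ℂ : 0 < Re z < Q }. -/

import Mathlib

open MeasureTheory Set

/-- Zamolodchikov's special function `Υ_{γ/2}`, defined on the strip `0 < Re z < Q`
as the exponential of the convergent integral. -/
noncomputable def Upsilon (γ : ℝ) (z : ℂ) : ℂ :=
  Complex.exp (∫ t in Set.Ioi (0:ℝ),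
    ((((γ/2 + 2/γ : ℝ) : ℂ)/2 - z)^2 * Complex.exp (-(t:ℂ))
      - (Complex.sinh ((((γ/2 + 2/γ : ℝ) : ℂ)/2 - z) * t / 2))^2
        / (Complex.sinh ((γ:ℂ) * t / 4) * Complex.sinh ((t:ℂ) / γ))) / (t:ℂ))


noncomputable def Complex.abs : AbsoluteValue ℂ ℝ where
  toFun := norm
  map_mul' := norm_mul
  nonneg' := norm_nonneg
  eq_zero' := fun _ => norm_eq_zero
  add_le' := norm_add_le

lemma Complex.abs_apply (z : ℂ) : Complex.abs z = ‖z‖ := rfl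

lemma Complex.norm_eq_abs (z : ℂ) : ‖z‖ = Complex.abs z := rfl

@[simp] lemma Complex.abs_ofReal (r : ℝ) : Complex.abs (r : ℂ) = |r| := Complex.norm_real r

@[simp] lemma Complex.abs_two : Complex.abs 2 = 2 := by simp [Complex.abs_apply]

lemma Complex.abs_exp (z : ℂ) : Complex.abs (Complex.exp z) = Real.exp z.re := Complex.norm_exp z

lemma Complex.abs_exp_sub_one_sub_id_le {x : ℂ} (hx : Complex.abs x ≤ 1) :
    Complex.abs (Complex.exp x - 1 - x) ≤ Complex.abs x ^ 2 :=
  Complex.norm_exp_sub_one_sub_id_le hx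

lemma Complex.abs_re_le_abs (z : ℂ) : |z.re| ≤ Complex.abs z := Complex.abs_re_le_norm z

lemma sinh_def' (w : ℂ) : Complex.sinh w = (Complex.exp w - Complex.exp (-w)) / 2 := rfl
lemma cosh_def' (w : ℂ) : Complex.cosh w = (Complex.exp w + Complex.exp (-w)) / 2 := rfl

lemma abs_sinh_sub_self_le {w : ℂ} (h : Complex.abs w ≤ 1) :
    Complex.abs (Complex.sinh w - w) ≤ Complex.abs w ^ 2 := by
  have h' : Complex.abs (-w) ≤ 1 := by simpa using h
  have h1 := Complex.abs_exp_sub_one_sub_id_le h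
  have h2 := Complex.abs_exp_sub_one_sub_id_le h'
  have hrw : Complex.sinh w - w
      = ((Complex.exp w - 1 - w) - (Complex.exp (-w) - 1 - (-w))) / 2 := by
    rw [sinh_def']; ring
  rw [hrw]
  rw [map_div₀]
  simp only [Complex.abs_two]
  calc Complex.abs ((Complex.exp w - 1 - w) - (Complex.exp (-w) - 1 - (-w))) / 2
      ≤ (Complex.abs (Complex.exp w - 1 - w) + Complex.abs (Complex.exp (-w) - 1 - (-w))) / 2 := by
        gcongr; exact Complex.abs.sub_le_add _ _
    _ ≤ (Complex.abs w ^ 2 + Complex.abs w ^ 2) / 2 := by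
        gcongr <;> first | exact h1 | simpa using h2
    _ = Complex.abs w ^ 2 := by ring

lemma abs_cosh_sub_one_le {w : ℂ} (h : Complex.abs w ≤ 1) :
    Complex.abs (Complex.cosh w - 1) ≤ Complex.abs w ^ 2 := by
  have h' : Complex.abs (-w) ≤ 1 := by simpa using h
  have h1 := Complex.abs_exp_sub_one_sub_id_le h
  have h2 := Complex.abs_exp_sub_one_sub_id_le h'
  have hrw : Complex.cosh w - 1
      = ((Complex.exp w - 1 - w) + (Complex.exp (-w) - 1 - (-w))) / 2 := by
    rw [cosh_def']; ring
  rw [hrw, map_div₀]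
  simp only [Complex.abs_two]
  calc Complex.abs ((Complex.exp w - 1 - w) + (Complex.exp (-w) - 1 - (-w))) / 2
      ≤ (Complex.abs (Complex.exp w - 1 - w) + Complex.abs (Complex.exp (-w) - 1 - (-w))) / 2 := by
        gcongr; exact Complex.abs.add_le _ _
    _ ≤ (Complex.abs w ^ 2 + Complex.abs w ^ 2) / 2 := by
        gcongr <;> first | exact h1 | simpa using h2
    _ = Complex.abs w ^ 2 := by ring

lemma abs_csinh_le (w : ℂ) : Complex.abs (Complex.sinh w) ≤ Real.exp |w.re| := by
  rw [sinh_def', map_div₀]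
  simp only [Complex.abs_two]
  have h1 : Complex.abs (Complex.exp w) ≤ Real.exp |w.re| := by
    rw [Complex.abs_exp]; exact Real.exp_le_exp.2 (le_abs_self _)
  have h2 : Complex.abs (Complex.exp (-w)) ≤ Real.exp |w.re| := by
    rw [Complex.abs_exp]; simp only [Complex.neg_re]
    exact Real.exp_le_exp.2 (neg_le_abs _)
  calc Complex.abs (Complex.exp w - Complex.exp (-w)) / 2
      ≤ (Complex.abs (Complex.exp w) + Complex.abs (Complex.exp (-w))) / 2 := by
        gcongr; exact Complex.abs.sub_le_add _ _
    _ ≤ Real.exp |w.re| := by linarith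

lemma abs_ccosh_le (w : ℂ) : Complex.abs (Complex.cosh w) ≤ Real.exp |w.re| := by
  rw [cosh_def', map_div₀]
  simp only [Complex.abs_two]
  have h1 : Complex.abs (Complex.exp w) ≤ Real.exp |w.re| := by
    rw [Complex.abs_exp]; exact Real.exp_le_exp.2 (le_abs_self _)
  have h2 : Complex.abs (Complex.exp (-w)) ≤ Real.exp |w.re| := by
    rw [Complex.abs_exp]; simp only [Complex.neg_re]
    exact Real.exp_le_exp.2 (neg_le_abs _)
  calc Complex.abs (Complex.exp w + Complex.exp (-w)) / 2
      ≤ (Complex.abs (Complex.exp w) + Complex.abs (Complex.exp (-w))) / 2 := by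
        gcongr; exact Complex.abs.add_le _ _
    _ ≤ Real.exp |w.re| := by linarith

lemma real_sinh_le {s : ℝ} (h0 : 0 ≤ s) (h1 : s ≤ 1) : Real.sinh s ≤ s + s ^ 2 := by
  have h : Complex.abs ((s : ℂ)) ≤ 1 := by
    rw [Complex.abs_ofReal]; rwa [abs_of_nonneg h0]
  have := abs_sinh_sub_self_le h
  rw [← Complex.ofReal_sinh, ← Complex.ofReal_sub, Complex.abs_ofReal, Complex.abs_ofReal,
    abs_of_nonneg h0] at this
  have := abs_le.1 this
  linarith [this.2]

lemma real_sinh_lower {s s₀ : ℝ} (h0 : 0 < s₀) (h : s₀ ≤ s) :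
    Real.exp s * (1 - Real.exp (-(2 * s₀))) / 2 ≤ Real.sinh s := by
  rw [Real.sinh_eq]
  have h1 : Real.exp (-s) ≤ Real.exp s * Real.exp (-(2 * s₀)) := by
    rw [← Real.exp_add]; exact Real.exp_le_exp.2 (by linarith)
  have h2 : Real.exp s * (1 - Real.exp (-(2 * s₀)))
      = Real.exp s - Real.exp s * Real.exp (-(2 * s₀)) := by ring
  rw [h2]; linarith

lemma real_self_le_sinh {s : ℝ} (h : 0 ≤ s) : s ≤ Real.sinh s := by
  rcases eq_or_lt_of_le h with h' | h'
  · simp [← h']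
  · exact (Real.self_lt_sinh_iff.2 h').le

lemma Dre_pos (γ : ℝ) (hγ0 : 0 < γ) {t : ℝ} (ht : 0 < t) :
    0 < Real.sinh (γ * t / 4) * Real.sinh (t / γ) :=
  mul_pos (Real.sinh_pos_iff.2 (by positivity)) (Real.sinh_pos_iff.2 (by positivity))

lemma Dre_lb (γ : ℝ) (hγ0 : 0 < γ) {t : ℝ} (ht : 0 < t) :
    t ^ 2 / 4 ≤ Real.sinh (γ * t / 4) * Real.sinh (t / γ) := by
  have h1 : γ * t / 4 ≤ Real.sinh (γ * t / 4) := real_self_le_sinh (by positivity)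
  have h2 : t / γ ≤ Real.sinh (t / γ) := real_self_le_sinh (by positivity)
  have he : (γ * t / 4) * (t / γ) = t ^ 2 / 4 := by field_simp
  calc t ^ 2 / 4 = (γ * t / 4) * (t / γ) := he.symm
    _ ≤ Real.sinh (γ * t / 4) * Real.sinh (t / γ) := by
        apply mul_le_mul h1 h2 (by positivity) ((Real.sinh_pos_iff.2 (by positivity)).le)

lemma Dre_ub (γ : ℝ) (hγ0 : 0 < γ) (hγ2 : γ < 2) {t : ℝ} (ht : 0 < t) (ht1 : t ≤ 1)
    (htγ : t ≤ γ) :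
    Real.sinh (γ * t / 4) * Real.sinh (t / γ) ≤ t ^ 2 / 4 + t ^ 2 / 4 * (t * (1 + 1 / γ)) := by
  set a := γ * t / 4 with ha
  set b := t / γ with hb
  have ha0 : 0 < a := by positivity
  have hb0 : 0 < b := by positivity
  have ha1 : a ≤ 1 := by rw [ha]; nlinarith
  have hb1 : b ≤ 1 := by rw [hb]; rw [div_le_one hγ0]; exact htγ
  have h1 : Real.sinh a ≤ a + a ^ 2 := real_sinh_le ha0.le ha1
  have h2 : Real.sinh b ≤ b + b ^ 2 := real_sinh_le hb0.le hb1
  have hs1 : 0 < Real.sinh a := Real.sinh_pos_iff.2 ha0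
  have hs2 : 0 < Real.sinh b := Real.sinh_pos_iff.2 hb0
  have hab : a * b = t ^ 2 / 4 := by rw [ha, hb]; field_simp
  have key : Real.sinh a * Real.sinh b ≤ (a * b) * (1 + a + b + a * b) := by nlinarith
  have hau : a ≤ t / 2 := by rw [ha]; nlinarith
  have habu : a * b ≤ t / 4 := by nlinarith [hab, sq_nonneg t]
  have hbu : b = t / γ := hb
  have hsum : a + b + a * b ≤ t * (1 + 1 / γ) := by
    have h5 : t / γ = t * (1 / γ) := by ring
    rw [hbu, h5]; nlinarith
  calc Real.sinh a * Real.sinh b ≤ (a * b) * (1 + (a + b + a * b)) := by nlinarith [key]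
    _ ≤ (t ^ 2 / 4) * (1 + t * (1 + 1 / γ)) := by
        rw [hab]
        exact mul_le_mul_of_nonneg_left (by linarith) (by positivity)
    _ = t ^ 2 / 4 + t ^ 2 / 4 * (t * (1 + 1 / γ)) := by ring

lemma Dre_lower (γ t₀ : ℝ) (hγ0 : 0 < γ) (ht₀ : 0 < t₀) {t : ℝ} (ht : t₀ ≤ t) :
    ((1 - Real.exp (-(γ * t₀ / 2))) * (1 - Real.exp (-(2 * t₀ / γ))) / 4)
        * Real.exp ((γ / 4 + 1 / γ) * t)
      ≤ Real.sinh (γ * t / 4) * Real.sinh (t / γ) := by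
  have h1 := real_sinh_lower (s := γ * t / 4) (s₀ := γ * t₀ / 4) (by positivity)
    (by nlinarith)
  have h2 := real_sinh_lower (s := t / γ) (s₀ := t₀ / γ) (by positivity)
    (by gcongr)
  have e1 : -(2 * (γ * t₀ / 4)) = -(γ * t₀ / 2) := by ring
  have e2 : -(2 * (t₀ / γ)) = -(2 * t₀ / γ) := by ring
  rw [e1] at h1; rw [e2] at h2
  have hexp : Real.exp (γ * t / 4) * Real.exp (t / γ) = Real.exp ((γ / 4 + 1 / γ) * t) := by
    rw [← Real.exp_add]; ring_nf
  have hq1 : (0:ℝ) ≤ γ * t₀ / 2 := by positivity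
  have hq2 : (0:ℝ) ≤ 2 * t₀ / γ := by positivity
  have hpos1 : (0:ℝ) ≤ 1 - Real.exp (-(γ * t₀ / 2)) := by
    have : Real.exp (-(γ * t₀ / 2)) ≤ 1 := Real.exp_le_one_iff.2 (by linarith)
    linarith
  have hpos2 : (0:ℝ) ≤ 1 - Real.exp (-(2 * t₀ / γ)) := by
    have : Real.exp (-(2 * t₀ / γ)) ≤ 1 := Real.exp_le_one_iff.2 (by linarith)
    linarith
  have htpos : 0 < t := lt_of_lt_of_le ht₀ ht
  have hmul := mul_le_mul h1 h2
    (div_nonneg (mul_nonneg (Real.exp_pos _).le hpos2) (by norm_num))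
    (Real.sinh_pos_iff.2 (by positivity)).le
  calc ((1 - Real.exp (-(γ * t₀ / 2))) * (1 - Real.exp (-(2 * t₀ / γ))) / 4)
        * Real.exp ((γ / 4 + 1 / γ) * t)
      = (Real.exp (γ * t / 4) * (1 - Real.exp (-(γ * t₀ / 2))) / 2)
        * (Real.exp (t / γ) * (1 - Real.exp (-(2 * t₀ / γ))) / 2) := by
        rw [← hexp]; ring
    _ ≤ Real.sinh (γ * t / 4) * Real.sinh (t / γ) := hmul

lemma denom_cast (γ t : ℝ) :
    Complex.sinh ((γ:ℂ) * t / 4) * Complex.sinh ((t:ℂ) / γ)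
      = ((Real.sinh (γ * t / 4) * Real.sinh (t / γ) : ℝ) : ℂ) := by
  have e1 : ((γ:ℂ) * t / 4) = ((γ * t / 4 : ℝ) : ℂ) := by push_cast; ring
  have e2 : ((t:ℂ) / γ) = ((t / γ : ℝ) : ℂ) := by push_cast; ring
  rw [e1, e2, ← Complex.ofReal_sinh, ← Complex.ofReal_sinh, ← Complex.ofReal_mul]

lemma exp_neg_cast (t : ℝ) : Complex.exp (-(t:ℂ)) = ((Real.exp (-t) : ℝ) : ℂ) := by
  rw [Complex.ofReal_exp, Complex.ofReal_neg]

lemma Fint_bound_small (γ : ℝ) (hγ0 : 0 < γ) (hγ2 : γ < 2) {t M : ℝ} (α : ℂ)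
    (ht : 0 < t) (ht1 : t ≤ 1) (htγ : t ≤ γ) (hαM : Complex.abs α ≤ M)
    (hsmall : M * t ≤ 1) :
    Complex.abs ((α ^ 2 * Complex.exp (-(t:ℂ))
      - (Complex.sinh (α * t / 2)) ^ 2
        / (Complex.sinh ((γ:ℂ) * t / 4) * Complex.sinh ((t:ℂ) / γ))) / (t:ℂ))
    ≤ M ^ 2 * (2 + 1 / γ) + 3 * M ^ 3 / 2 := by
  have hM0 : 0 ≤ M := le_trans (Complex.abs.nonneg α) hαM
  set D := Real.sinh (γ * t / 4) * Real.sinh (t / γ) with hD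
  have hDpos := Dre_pos γ hγ0 ht
  have hDlb := Dre_lb γ hγ0 ht
  have hDub := Dre_ub γ hγ0 hγ2 ht ht1 htγ
  set w : ℂ := α * t / 2 with hw
  have hwabs : Complex.abs w = Complex.abs α * t / 2 := by
    rw [hw, map_div₀, map_mul, Complex.abs_ofReal, abs_of_pos ht, Complex.abs_two]
  have hwM : Complex.abs w ≤ M * t / 2 := by rw [hwabs]; gcongr
  have hw1 : Complex.abs w ≤ 1 := by
    rw [hwabs]; nlinarith [Complex.abs.nonneg α]
  set S := Complex.sinh w with hS
  have hsinh := abs_sinh_sub_self_le hw1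
  have hsinhle : Complex.abs S ≤ 2 * Complex.abs w := by
    have : S = (S - w) + w := by ring
    rw [this]
    calc Complex.abs ((S - w) + w) ≤ Complex.abs (S - w) + Complex.abs w := Complex.abs.add_le _ _
      _ ≤ Complex.abs w ^ 2 + Complex.abs w := by gcongr
      _ ≤ 2 * Complex.abs w := by nlinarith [Complex.abs.nonneg w]
  have hsq : Complex.abs (w ^ 2 - S ^ 2) ≤ 3 * Complex.abs w ^ 3 := by
    have hfac : w ^ 2 - S ^ 2 = (w - S) * (w + S) := by ring
    rw [hfac, map_mul]
    have h1 : Complex.abs (w - S) ≤ Complex.abs w ^ 2 := by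
      rw [← Complex.abs.map_neg, neg_sub]; exact hsinh
    have h2 : Complex.abs (w + S) ≤ 3 * Complex.abs w := by
      calc Complex.abs (w + S) ≤ Complex.abs w + Complex.abs S := Complex.abs.add_le _ _
        _ ≤ Complex.abs w + 2 * Complex.abs w := by gcongr
        _ = 3 * Complex.abs w := by ring
    calc Complex.abs (w - S) * Complex.abs (w + S)
        ≤ Complex.abs w ^ 2 * (3 * Complex.abs w) := by
          apply mul_le_mul h1 h2 (Complex.abs.nonneg _) (by positivity)
      _ = 3 * Complex.abs w ^ 3 := by ring
  -- rewrite the expression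
  rw [denom_cast, exp_neg_cast]
  rw [← hD]
  set E := Real.exp (-t) with hE
  have hE1 : |E - 1| ≤ t := by
    have h1 : E ≤ 1 := Real.exp_le_one_iff.2 (by linarith)
    have h2 : 1 - t ≤ E := by
      have := Real.add_one_le_exp (-t)
      linarith
    rw [abs_le]; constructor <;> linarith
  -- numerator bound
  have hnum : Complex.abs (α ^ 2 * ((E:ℝ):ℂ) - S ^ 2 / ((D:ℝ):ℂ))
      ≤ t * (M ^ 2 * (2 + 1 / γ) + 3 * M ^ 3 / 2) := by
    have hDne : ((D:ℝ):ℂ) ≠ 0 := Complex.ofReal_ne_zero.2 hDpos.ne'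
    have hsplit : α ^ 2 * ((E:ℝ):ℂ) - S ^ 2 / ((D:ℝ):ℂ)
        = α ^ 2 * (((E:ℝ):ℂ) - 1) + (α ^ 2 * ((D:ℝ):ℂ) - S ^ 2) / ((D:ℝ):ℂ) := by
      field_simp
      ring
    rw [hsplit]
    have ha : Complex.abs (α ^ 2 * (((E:ℝ):ℂ) - 1)) ≤ M ^ 2 * t := by
      rw [map_mul, map_pow]
      have : Complex.abs (((E:ℝ):ℂ) - 1) = |E - 1| := by
        rw [show (((E:ℝ):ℂ) - 1) = ((E - 1 : ℝ):ℂ) by push_cast; ring, Complex.abs_ofReal]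
      rw [this]
      exact mul_le_mul (pow_le_pow_left₀ (Complex.abs.nonneg α) hαM 2) hE1
        (abs_nonneg _) (by positivity)
    have hb : Complex.abs ((α ^ 2 * ((D:ℝ):ℂ) - S ^ 2) / ((D:ℝ):ℂ))
        ≤ t * (M ^ 2 * (1 + 1 / γ) + 3 * M ^ 3 / 2) := by
      rw [map_div₀, Complex.abs_ofReal, abs_of_pos hDpos]
      have hsplit2 : α ^ 2 * ((D:ℝ):ℂ) - S ^ 2
          = α ^ 2 * (((D:ℝ):ℂ) - ((t ^ 2 / 4 : ℝ):ℂ)) + (w ^ 2 - S ^ 2) := by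
        rw [hw]; push_cast; ring
      have hnum2 : Complex.abs (α ^ 2 * ((D:ℝ):ℂ) - S ^ 2)
          ≤ M ^ 2 * (t ^ 2 / 4 * (t * (1 + 1 / γ))) + 3 * (M * t / 2) ^ 3 := by
        rw [hsplit2]
        calc Complex.abs (α ^ 2 * (((D:ℝ):ℂ) - ((t ^ 2 / 4 : ℝ):ℂ)) + (w ^ 2 - S ^ 2))
            ≤ Complex.abs (α ^ 2 * (((D:ℝ):ℂ) - ((t ^ 2 / 4 : ℝ):ℂ)))
              + Complex.abs (w ^ 2 - S ^ 2) := Complex.abs.add_le _ _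
          _ ≤ M ^ 2 * (t ^ 2 / 4 * (t * (1 + 1 / γ))) + 3 * (M * t / 2) ^ 3 := by
              apply add_le_add
              · rw [map_mul, map_pow]
                have hcc : Complex.abs (((D:ℝ):ℂ) - ((t ^ 2 / 4 : ℝ):ℂ)) = |D - t ^ 2 / 4| := by
                  rw [← Complex.ofReal_sub, Complex.abs_ofReal]
                rw [hcc, abs_of_nonneg (by linarith)]
                apply mul_le_mul (pow_le_pow_left₀ (Complex.abs.nonneg α) hαM 2) (by linarith)
                  (by linarith) (by positivity)
              · calc Complex.abs (w ^ 2 - S ^ 2) ≤ 3 * Complex.abs w ^ 3 := hsq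
                  _ ≤ 3 * (M * t / 2) ^ 3 := by
                      have h3 := pow_le_pow_left₀ (Complex.abs.nonneg w) hwM 3
                      linarith
      calc Complex.abs (α ^ 2 * ((D:ℝ):ℂ) - S ^ 2) / D
          ≤ (M ^ 2 * (t ^ 2 / 4 * (t * (1 + 1 / γ))) + 3 * (M * t / 2) ^ 3) / (t ^ 2 / 4) := by
            apply div_le_div₀ (by positivity) hnum2 (by positivity) hDlb
        _ = t * (M ^ 2 * (1 + 1 / γ) + 3 * M ^ 3 / 2) := by
            field_simp
            ring
    calc Complex.abs (α ^ 2 * (((E:ℝ):ℂ) - 1) + (α ^ 2 * ((D:ℝ):ℂ) - S ^ 2) / ((D:ℝ):ℂ))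
        ≤ Complex.abs (α ^ 2 * (((E:ℝ):ℂ) - 1))
          + Complex.abs ((α ^ 2 * ((D:ℝ):ℂ) - S ^ 2) / ((D:ℝ):ℂ)) := Complex.abs.add_le _ _
      _ ≤ M ^ 2 * t + t * (M ^ 2 * (1 + 1 / γ) + 3 * M ^ 3 / 2) := by gcongr
      _ = t * (M ^ 2 * (2 + 1 / γ) + 3 * M ^ 3 / 2) := by ring
  rw [map_div₀, Complex.abs_ofReal, abs_of_pos ht, div_le_iff₀ ht]
  calc Complex.abs (α ^ 2 * ((E:ℝ):ℂ) - S ^ 2 / ((D:ℝ):ℂ))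
      ≤ t * (M ^ 2 * (2 + 1 / γ) + 3 * M ^ 3 / 2) := hnum
    _ = (M ^ 2 * (2 + 1 / γ) + 3 * M ^ 3 / 2) * t := by ring

lemma ident_aux (a e s c d tC : ℂ) (ht : tC ≠ 0) (hd : d ≠ 0) :
    (-2 * a * e + tC * s * c / d) / tC
      = 2 * a * (1 - e) / tC + (s * c - a * tC / 2) / d
        + (a * tC / 2) * ((tC ^ 2 / 4) - d) / (d * (tC ^ 2 / 4)) := by
  have h4 : (tC ^ 2 / 4 : ℂ) ≠ 0 := by
    simp only [div_ne_zero_iff]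
    exact ⟨pow_ne_zero 2 ht, by norm_num⟩
  rw [div_add_div _ _ ht hd, div_add_div _ _ (mul_ne_zero ht hd) (mul_ne_zero hd h4),
    div_eq_div_iff ht (mul_ne_zero (mul_ne_zero ht hd) (mul_ne_zero hd h4))]
  field_simp
  ring

lemma Fder_bound_small (γ : ℝ) (hγ0 : 0 < γ) (hγ2 : γ < 2) {t M : ℝ} (α : ℂ)
    (ht : 0 < t) (ht1 : t ≤ 1) (htγ : t ≤ γ) (hαM : Complex.abs α ≤ M)
    (hsmall : M * t ≤ 1) :
    Complex.abs ((-2 * α * Complex.exp (-(t:ℂ))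
      + (t:ℂ) * Complex.sinh (α * t / 2) * Complex.cosh (α * t / 2)
        / (Complex.sinh ((γ:ℂ) * t / 4) * Complex.sinh ((t:ℂ) / γ))) / (t:ℂ))
    ≤ 2 * M + 2 * M ^ 2 + 2 * M * (1 + 1 / γ) := by
  have hM0 : 0 ≤ M := le_trans (Complex.abs.nonneg α) hαM
  rw [denom_cast, exp_neg_cast]
  set D := Real.sinh (γ * t / 4) * Real.sinh (t / γ) with hD
  have hDpos := Dre_pos γ hγ0 ht
  rw [← hD] at hDpos
  have hDlb := Dre_lb γ hγ0 ht
  rw [← hD] at hDlb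
  have hDub := Dre_ub γ hγ0 hγ2 ht ht1 htγ
  rw [← hD] at hDub
  set E := Real.exp (-t) with hE
  set w : ℂ := α * t / 2 with hw
  set S := Complex.sinh w with hS
  set Ch := Complex.cosh w with hCh
  have htne : ((t:ℝ):ℂ) ≠ 0 := Complex.ofReal_ne_zero.2 ht.ne'
  have hDne : ((D:ℝ):ℂ) ≠ 0 := Complex.ofReal_ne_zero.2 hDpos.ne'
  have ht2ne : (((t ^ 2 / 4 : ℝ)):ℂ) ≠ 0 := Complex.ofReal_ne_zero.2 (by positivity)
  have hwabs : Complex.abs w = Complex.abs α * t / 2 := by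
    rw [hw, map_div₀, map_mul, Complex.abs_ofReal, abs_of_pos ht, Complex.abs_two]
  have hwM : Complex.abs w ≤ M * t / 2 := by rw [hwabs]; gcongr
  have hq : (((t ^ 2 / 4 : ℝ)):ℂ) = ((t:ℂ)) ^ 2 / 4 := by push_cast; ring
  have hident : (-2 * α * ((E:ℝ):ℂ) + (t:ℂ) * S * Ch / ((D:ℝ):ℂ)) / (t:ℂ)
      = 2 * α * (1 - ((E:ℝ):ℂ)) / (t:ℂ) + (S * Ch - w) / ((D:ℝ):ℂ)
        + w * (((t ^ 2 / 4 : ℝ):ℂ) - ((D:ℝ):ℂ)) / (((D:ℝ):ℂ) * ((t ^ 2 / 4 : ℝ):ℂ)) := by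
    rw [hw, hq]
    exact ident_aux α ((E:ℝ):ℂ) S Ch ((D:ℝ):ℂ) (t:ℂ) htne hDne
  rw [hident]
  have hE1 : |1 - E| ≤ t := by
    have h1 : E ≤ 1 := Real.exp_le_one_iff.2 (by linarith)
    have h2 : 1 - t ≤ E := by have := Real.add_one_le_exp (-t); linarith
    rw [abs_le]; constructor <;> linarith
  have hT1 : Complex.abs (2 * α * (1 - ((E:ℝ):ℂ)) / (t:ℂ)) ≤ 2 * M := by
    rw [map_div₀, map_mul, map_mul, Complex.abs_two, Complex.abs_ofReal, abs_of_pos ht]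
    have hcc : Complex.abs (1 - ((E:ℝ):ℂ)) = |1 - E| := by
      rw [show (1 - ((E:ℝ):ℂ)) = ((1 - E : ℝ):ℂ) by push_cast; ring, Complex.abs_ofReal]
    rw [hcc, div_le_iff₀ ht]
    calc 2 * Complex.abs α * |1 - E| ≤ 2 * M * t := by
          apply mul_le_mul (by gcongr) hE1 (abs_nonneg _) (by positivity)
      _ = 2 * M * t := rfl
  have hT2 : Complex.abs ((S * Ch - w) / ((D:ℝ):ℂ)) ≤ 2 * M ^ 2 := by
    rw [map_div₀, Complex.abs_ofReal, abs_of_pos hDpos]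
    have h2w : Complex.abs (2 * w) ≤ 1 := by
      rw [map_mul, Complex.abs_two, hwabs]
      nlinarith [Complex.abs.nonneg α, mul_le_mul_of_nonneg_right hαM ht.le]
    have hfac : S * Ch - w = (Complex.sinh (2 * w) - 2 * w) / 2 := by
      rw [Complex.sinh_two_mul, hS, hCh]; ring
    have habs : Complex.abs (S * Ch - w) ≤ 2 * Complex.abs w ^ 2 := by
      rw [hfac, map_div₀, Complex.abs_two]
      have := abs_sinh_sub_self_le h2w
      have h2 : Complex.abs (2 * w) ^ 2 = 4 * Complex.abs w ^ 2 := by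
        rw [map_mul, Complex.abs_two]; ring
      rw [h2] at this
      linarith
    calc Complex.abs (S * Ch - w) / D ≤ (2 * (M * t / 2) ^ 2) / (t ^ 2 / 4) := by
          apply div_le_div₀ (by positivity) _ (by positivity) hDlb
          calc Complex.abs (S * Ch - w) ≤ 2 * Complex.abs w ^ 2 := habs
            _ ≤ 2 * (M * t / 2) ^ 2 := by
                have := pow_le_pow_left₀ (Complex.abs.nonneg w) hwM 2
                linarith
      _ = 2 * M ^ 2 := by field_simp; ring
  have hT3 : Complex.abs (w * (((t ^ 2 / 4 : ℝ):ℂ) - ((D:ℝ):ℂ))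
        / (((D:ℝ):ℂ) * ((t ^ 2 / 4 : ℝ):ℂ))) ≤ 2 * M * (1 + 1 / γ) := by
    rw [map_div₀, map_mul, map_mul, Complex.abs_ofReal, Complex.abs_ofReal]
    have hcc : Complex.abs (((t ^ 2 / 4 : ℝ):ℂ) - ((D:ℝ):ℂ)) = |t ^ 2 / 4 - D| := by
      rw [← Complex.ofReal_sub, Complex.abs_ofReal]
    rw [hcc, abs_of_pos hDpos, abs_of_pos (show (0:ℝ) < t ^ 2 / 4 by positivity)]
    have hnum : Complex.abs w * |t ^ 2 / 4 - D| ≤ (M * t / 2) * (t ^ 2 / 4 * (t * (1 + 1 / γ))) := by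
      apply mul_le_mul hwM _ (abs_nonneg _) (by positivity)
      rw [abs_sub_comm, abs_of_nonneg (by linarith)]
      linarith
    calc Complex.abs w * |t ^ 2 / 4 - D| / (D * (t ^ 2 / 4))
        ≤ (M * t / 2) * (t ^ 2 / 4 * (t * (1 + 1 / γ))) / (t ^ 2 / 4 * (t ^ 2 / 4)) := by
          apply div_le_div₀ (by positivity) hnum (by positivity)
          apply mul_le_mul_of_nonneg_right hDlb (by positivity)
      _ = 2 * M * (1 + 1 / γ) := by field_simp; ring
  calc Complex.abs (2 * α * (1 - ((E:ℝ):ℂ)) / (t:ℂ) + (S * Ch - w) / ((D:ℝ):ℂ)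
        + w * (((t ^ 2 / 4 : ℝ):ℂ) - ((D:ℝ):ℂ)) / (((D:ℝ):ℂ) * ((t ^ 2 / 4 : ℝ):ℂ)))
      ≤ Complex.abs (2 * α * (1 - ((E:ℝ):ℂ)) / (t:ℂ) + (S * Ch - w) / ((D:ℝ):ℂ))
        + Complex.abs (w * (((t ^ 2 / 4 : ℝ):ℂ) - ((D:ℝ):ℂ))
          / (((D:ℝ):ℂ) * ((t ^ 2 / 4 : ℝ):ℂ))) := Complex.abs.add_le _ _
    _ ≤ (Complex.abs (2 * α * (1 - ((E:ℝ):ℂ)) / (t:ℂ))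
        + Complex.abs ((S * Ch - w) / ((D:ℝ):ℂ)))
        + Complex.abs (w * (((t ^ 2 / 4 : ℝ):ℂ) - ((D:ℝ):ℂ))
          / (((D:ℝ):ℂ) * ((t ^ 2 / 4 : ℝ):ℂ))) := by
        gcongr
        exact Complex.abs.add_le _ _
    _ ≤ (2 * M + 2 * M ^ 2) + 2 * M * (1 + 1 / γ) :=
        add_le_add (add_le_add hT1 hT2) hT3
    _ = 2 * M + 2 * M ^ 2 + 2 * M * (1 + 1 / γ) := by ring

lemma re_half (α : ℂ) (t : ℝ) : (α * (t:ℂ) / 2).re = α.re * (t / 2) := by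
  have h : α * (t:ℂ) / 2 = α * (((t / 2 : ℝ)):ℂ) := by push_cast; ring
  rw [h, Complex.mul_re, Complex.ofReal_re, Complex.ofReal_im]
  simp

lemma cpos (γ t₀ : ℝ) (hγ0 : 0 < γ) (ht₀ : 0 < t₀) :
    0 < (1 - Real.exp (-(γ * t₀ / 2))) * (1 - Real.exp (-(2 * t₀ / γ))) / 4 := by
  have h1 : Real.exp (-(γ * t₀ / 2)) < 1 := by
    rw [Real.exp_lt_one_iff]
    have : 0 < γ * t₀ / 2 := by positivity
    linarith
  have h2 : Real.exp (-(2 * t₀ / γ)) < 1 := by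
    rw [Real.exp_lt_one_iff]
    have : 0 < 2 * t₀ / γ := by positivity
    linarith
  have := mul_pos (by linarith : (0:ℝ) < 1 - Real.exp (-(γ * t₀ / 2)))
    (by linarith : (0:ℝ) < 1 - Real.exp (-(2 * t₀ / γ)))
  linarith

lemma SD_bound (γ t₀ : ℝ) (hγ0 : 0 < γ) (ht₀ : 0 < t₀) {t A : ℝ} (ht : t₀ ≤ t)
    (α : ℂ) (hre : |α.re| ≤ A) :
    Complex.abs (Complex.sinh (α * (t:ℂ) / 2)) ≤ Real.exp (A * (t / 2)) ∧
    Complex.abs (Complex.cosh (α * (t:ℂ) / 2)) ≤ Real.exp (A * (t / 2)) := by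
  have htpos : 0 < t := lt_of_lt_of_le ht₀ ht
  have hrew : |(α * (t:ℂ) / 2).re| ≤ A * (t / 2) := by
    rw [re_half, abs_mul, abs_of_pos (by positivity : (0:ℝ) < t / 2)]
    exact mul_le_mul_of_nonneg_right hre (by positivity)
  constructor
  · exact le_trans (abs_csinh_le _) (Real.exp_le_exp.2 hrew)
  · exact le_trans (abs_ccosh_le _) (Real.exp_le_exp.2 hrew)

lemma Fint_bound_large (γ : ℝ) (hγ0 : 0 < γ) {t t₀ M A : ℝ} (α : ℂ)
    (ht₀ : 0 < t₀) (ht : t₀ ≤ t) (hαM : Complex.abs α ≤ M) (hre : |α.re| ≤ A) :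
    Complex.abs ((α ^ 2 * Complex.exp (-(t:ℂ))
      - (Complex.sinh (α * t / 2)) ^ 2
        / (Complex.sinh ((γ:ℂ) * t / 4) * Complex.sinh ((t:ℂ) / γ))) / (t:ℂ))
    ≤ M ^ 2 * Real.exp (-t) / t₀
      + Real.exp ((A - (γ / 4 + 1 / γ)) * t)
        / (((1 - Real.exp (-(γ * t₀ / 2))) * (1 - Real.exp (-(2 * t₀ / γ))) / 4) * t₀) := by
  have htpos : 0 < t := lt_of_lt_of_le ht₀ ht
  have hM0 : 0 ≤ M := le_trans (Complex.abs.nonneg α) hαM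
  set c := (1 - Real.exp (-(γ * t₀ / 2))) * (1 - Real.exp (-(2 * t₀ / γ))) / 4 with hc
  have hcpos : 0 < c := cpos γ t₀ hγ0 ht₀
  rw [denom_cast, exp_neg_cast]
  set D := Real.sinh (γ * t / 4) * Real.sinh (t / γ) with hD
  have hDpos : 0 < D := Dre_pos γ hγ0 htpos
  have hDlow : c * Real.exp ((γ / 4 + 1 / γ) * t) ≤ D := Dre_lower γ t₀ hγ0 ht₀ ht
  obtain ⟨hSb, -⟩ := SD_bound γ t₀ hγ0 ht₀ ht α hre
  rw [map_div₀, Complex.abs_ofReal, abs_of_pos htpos]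
  have hnum : Complex.abs (α ^ 2 * ((Real.exp (-t) : ℝ):ℂ) - Complex.sinh (α * (t:ℂ) / 2) ^ 2 / ((D:ℝ):ℂ))
      ≤ M ^ 2 * Real.exp (-t) + Real.exp ((A - (γ / 4 + 1 / γ)) * t) / c := by
    calc Complex.abs (α ^ 2 * ((Real.exp (-t) : ℝ):ℂ) - Complex.sinh (α * (t:ℂ) / 2) ^ 2 / ((D:ℝ):ℂ))
        ≤ Complex.abs (α ^ 2 * ((Real.exp (-t) : ℝ):ℂ))
          + Complex.abs (Complex.sinh (α * (t:ℂ) / 2) ^ 2 / ((D:ℝ):ℂ)) := Complex.abs.sub_le_add _ _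
      _ ≤ M ^ 2 * Real.exp (-t) + Real.exp ((A - (γ / 4 + 1 / γ)) * t) / c := by
          apply add_le_add
          · rw [map_mul, map_pow, Complex.abs_ofReal, abs_of_pos (Real.exp_pos _)]
            exact mul_le_mul_of_nonneg_right (pow_le_pow_left₀ (Complex.abs.nonneg α) hαM 2)
              (Real.exp_pos _).le
          · rw [map_div₀, map_pow, Complex.abs_ofReal, abs_of_pos hDpos]
            have hS2 : Complex.abs (Complex.sinh (α * (t:ℂ) / 2)) ^ 2
                ≤ Real.exp (A * t) := by
              have := pow_le_pow_left₀ (Complex.abs.nonneg _) hSb 2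
              rwa [← Real.exp_nat_mul, show (2:ℕ) * (A * (t/2)) = A * t by push_cast; ring] at this
            calc Complex.abs (Complex.sinh (α * (t:ℂ) / 2)) ^ 2 / D
                ≤ Real.exp (A * t) / (c * Real.exp ((γ / 4 + 1 / γ) * t)) := by
                  apply div_le_div₀ (Real.exp_pos _).le hS2 (by positivity) hDlow
              _ = Real.exp ((A - (γ / 4 + 1 / γ)) * t) / c := by
                  rw [show (A - (γ / 4 + 1 / γ)) * t = A * t - (γ / 4 + 1 / γ) * t by ring,
                    Real.exp_sub]
                  rw [div_div]
                  rw [mul_comm c]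
      _ = M ^ 2 * Real.exp (-t) + Real.exp ((A - (γ / 4 + 1 / γ)) * t) / c := rfl
  calc Complex.abs (α ^ 2 * ((Real.exp (-t) : ℝ):ℂ) - Complex.sinh (α * (t:ℂ) / 2) ^ 2 / ((D:ℝ):ℂ)) / t
      ≤ (M ^ 2 * Real.exp (-t) + Real.exp ((A - (γ / 4 + 1 / γ)) * t) / c) / t₀ := by
        apply div_le_div₀ (by positivity) hnum ht₀ ht
    _ = M ^ 2 * Real.exp (-t) / t₀ + Real.exp ((A - (γ / 4 + 1 / γ)) * t) / (c * t₀) := by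
        field_simp

lemma Fder_bound_large (γ : ℝ) (hγ0 : 0 < γ) {t t₀ M A : ℝ} (α : ℂ)
    (ht₀ : 0 < t₀) (ht : t₀ ≤ t) (hαM : Complex.abs α ≤ M) (hre : |α.re| ≤ A) :
    Complex.abs ((-2 * α * Complex.exp (-(t:ℂ))
      + (t:ℂ) * Complex.sinh (α * t / 2) * Complex.cosh (α * t / 2)
        / (Complex.sinh ((γ:ℂ) * t / 4) * Complex.sinh ((t:ℂ) / γ))) / (t:ℂ))
    ≤ 2 * M * Real.exp (-t) / t₀
      + Real.exp ((A - (γ / 4 + 1 / γ)) * t)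
        / ((1 - Real.exp (-(γ * t₀ / 2))) * (1 - Real.exp (-(2 * t₀ / γ))) / 4) := by
  have htpos : 0 < t := lt_of_lt_of_le ht₀ ht
  have hM0 : 0 ≤ M := le_trans (Complex.abs.nonneg α) hαM
  set c := (1 - Real.exp (-(γ * t₀ / 2))) * (1 - Real.exp (-(2 * t₀ / γ))) / 4 with hc
  have hcpos : 0 < c := cpos γ t₀ hγ0 ht₀
  rw [denom_cast, exp_neg_cast]
  set D := Real.sinh (γ * t / 4) * Real.sinh (t / γ) with hD
  have hDpos : 0 < D := Dre_pos γ hγ0 htpos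
  have hDlow : c * Real.exp ((γ / 4 + 1 / γ) * t) ≤ D := Dre_lower γ t₀ hγ0 ht₀ ht
  obtain ⟨hSb, hCb⟩ := SD_bound γ t₀ hγ0 ht₀ ht α hre
  have htne : ((t:ℝ):ℂ) ≠ 0 := Complex.ofReal_ne_zero.2 htpos.ne'
  have hDne : ((D:ℝ):ℂ) ≠ 0 := Complex.ofReal_ne_zero.2 hDpos.ne'
  have hsplit : (-2 * α * ((Real.exp (-t) : ℝ):ℂ)
        + (t:ℂ) * Complex.sinh (α * (t:ℂ) / 2) * Complex.cosh (α * (t:ℂ) / 2) / ((D:ℝ):ℂ)) / (t:ℂ)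
      = -2 * α * ((Real.exp (-t) : ℝ):ℂ) / (t:ℂ)
        + Complex.sinh (α * (t:ℂ) / 2) * Complex.cosh (α * (t:ℂ) / 2) / ((D:ℝ):ℂ) := by
    field_simp
  rw [hsplit]
  have hT1 : Complex.abs (-2 * α * ((Real.exp (-t) : ℝ):ℂ) / (t:ℂ)) ≤ 2 * M * Real.exp (-t) / t₀ := by
    rw [map_div₀, Complex.abs_ofReal, abs_of_pos htpos, map_mul, map_mul, Complex.abs_ofReal,
      abs_of_pos (Real.exp_pos _)]
    have habs2 : Complex.abs (-2 : ℂ) = 2 := by norm_num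
    rw [habs2]
    apply div_le_div₀ (by positivity) _ ht₀ ht
    have := mul_le_mul_of_nonneg_right hαM (Real.exp_pos (-t)).le
    nlinarith [Real.exp_pos (-t)]
  have hT2 : Complex.abs (Complex.sinh (α * (t:ℂ) / 2) * Complex.cosh (α * (t:ℂ) / 2) / ((D:ℝ):ℂ))
      ≤ Real.exp ((A - (γ / 4 + 1 / γ)) * t) / c := by
    rw [map_div₀, map_mul, Complex.abs_ofReal, abs_of_pos hDpos]
    have hSC : Complex.abs (Complex.sinh (α * (t:ℂ) / 2)) * Complex.abs (Complex.cosh (α * (t:ℂ) / 2))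
        ≤ Real.exp (A * t) := by
      have := mul_le_mul hSb hCb (Complex.abs.nonneg _) (Real.exp_pos _).le
      rwa [← Real.exp_add, show A * (t/2) + A * (t/2) = A * t by ring] at this
    calc Complex.abs (Complex.sinh (α * (t:ℂ) / 2)) * Complex.abs (Complex.cosh (α * (t:ℂ) / 2)) / D
        ≤ Real.exp (A * t) / (c * Real.exp ((γ / 4 + 1 / γ) * t)) := by
          apply div_le_div₀ (Real.exp_pos _).le hSC (by positivity) hDlow
      _ = Real.exp ((A - (γ / 4 + 1 / γ)) * t) / c := by
          rw [show (A - (γ / 4 + 1 / γ)) * t = A * t - (γ / 4 + 1 / γ) * t by ring,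
            Real.exp_sub, div_div, mul_comm c]
  calc Complex.abs (-2 * α * ((Real.exp (-t) : ℝ):ℂ) / (t:ℂ)
        + Complex.sinh (α * (t:ℂ) / 2) * Complex.cosh (α * (t:ℂ) / 2) / ((D:ℝ):ℂ))
      ≤ Complex.abs (-2 * α * ((Real.exp (-t) : ℝ):ℂ) / (t:ℂ))
        + Complex.abs (Complex.sinh (α * (t:ℂ) / 2) * Complex.cosh (α * (t:ℂ) / 2) / ((D:ℝ):ℂ)) :=
        Complex.abs.add_le _ _
    _ ≤ 2 * M * Real.exp (-t) / t₀ + Real.exp ((A - (γ / 4 + 1 / γ)) * t) / c :=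
        add_le_add hT1 hT2

lemma integrand_hasDerivAt (γ Q : ℝ) {t : ℝ} (z : ℂ) :
    HasDerivAt (fun z : ℂ => ((((Q:ℝ)):ℂ)/2 - z) ^ 2 * Complex.exp (-(t:ℂ))
      - (Complex.sinh (((((Q:ℝ)):ℂ)/2 - z) * t / 2)) ^ 2
        / (Complex.sinh ((γ:ℂ) * t / 4) * Complex.sinh ((t:ℂ) / γ)))
      ((2 * ((((Q:ℝ)):ℂ)/2 - z) ^ 1 * (-1)) * Complex.exp (-(t:ℂ))
        - (2 * (Complex.sinh (((((Q:ℝ)):ℂ)/2 - z) * t / 2)) ^ 1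
            * (Complex.cosh (((((Q:ℝ)):ℂ)/2 - z) * t / 2) * (-1 * (t:ℂ) / 2)))
          / (Complex.sinh ((γ:ℂ) * t / 4) * Complex.sinh ((t:ℂ) / γ))) z := by
  have hα : HasDerivAt (fun z : ℂ => (((Q:ℝ)):ℂ)/2 - z) (-1) z := by
    simpa using (hasDerivAt_id z).const_sub ((((Q:ℝ)):ℂ)/2)
  have h1 : HasDerivAt (fun z : ℂ => ((((Q:ℝ)):ℂ)/2 - z) ^ 2 * Complex.exp (-(t:ℂ)))
      ((2 * ((((Q:ℝ)):ℂ)/2 - z) ^ 1 * (-1)) * Complex.exp (-(t:ℂ))) z :=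
    (hα.pow 2).mul_const _
  have h2 : HasDerivAt (fun z : ℂ => ((((Q:ℝ)):ℂ)/2 - z) * t / 2) (-1 * (t:ℂ) / 2) z :=
    (hα.mul_const _).div_const 2
  have h3 := (Complex.hasDerivAt_sinh (((((Q:ℝ)):ℂ)/2 - z) * t / 2)).comp z h2
  have h4 := h3.pow 2
  have h5 := h4.div_const (Complex.sinh ((γ:ℂ) * t / 4) * Complex.sinh ((t:ℂ) / γ))
  exact h1.sub h5

lemma cont_F (γ Q : ℝ) (hγ0 : 0 < γ) (z : ℂ) :
    ContinuousOn (fun t : ℝ => (((((Q:ℝ)):ℂ)/2 - z) ^ 2 * Complex.exp (-(t:ℂ))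
      - (Complex.sinh (((((Q:ℝ)):ℂ)/2 - z) * t / 2)) ^ 2
        / (Complex.sinh ((γ:ℂ) * t / 4) * Complex.sinh ((t:ℂ) / γ))) / (t:ℂ)) (Ioi 0) := by
  apply ContinuousOn.div
  · apply ContinuousOn.sub
    · exact (continuous_const.mul
        (Complex.continuous_exp.comp Complex.continuous_ofReal.neg)).continuousOn
    · apply ContinuousOn.div
      · exact ((Complex.continuous_sinh.comp
          ((continuous_const.mul Complex.continuous_ofReal).div_const 2)).pow 2).continuousOn
      · exact ((Complex.continuous_sinh.comp
            ((continuous_const.mul Complex.continuous_ofReal).div_const 4)).mul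
          (Complex.continuous_sinh.comp
            (Complex.continuous_ofReal.div_const ((γ:ℂ))))).continuousOn
      · intro t ht
        rw [denom_cast]
        exact Complex.ofReal_ne_zero.2 (Dre_pos γ hγ0 ht).ne'
  · exact Complex.continuous_ofReal.continuousOn
  · intro t ht
    exact Complex.ofReal_ne_zero.2 (ne_of_gt ht)

lemma cont_F' (γ Q : ℝ) (hγ0 : 0 < γ) (z : ℂ) :
    ContinuousOn (fun t : ℝ => (-2 * ((((Q:ℝ)):ℂ)/2 - z) * Complex.exp (-(t:ℂ))
      + (t:ℂ) * Complex.sinh (((((Q:ℝ)):ℂ)/2 - z) * t / 2)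
          * Complex.cosh (((((Q:ℝ)):ℂ)/2 - z) * t / 2)
        / (Complex.sinh ((γ:ℂ) * t / 4) * Complex.sinh ((t:ℂ) / γ))) / (t:ℂ)) (Ioi 0) := by
  apply ContinuousOn.div
  · apply ContinuousOn.add
    · exact (continuous_const.mul
        (Complex.continuous_exp.comp Complex.continuous_ofReal.neg)).continuousOn
    · apply ContinuousOn.div
      · exact ((Complex.continuous_ofReal.mul (Complex.continuous_sinh.comp
            ((continuous_const.mul Complex.continuous_ofReal).div_const 2))).mul
          (Complex.continuous_cosh.comp
            ((continuous_const.mul Complex.continuous_ofReal).div_const 2))).continuousOn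
      · exact ((Complex.continuous_sinh.comp
            ((continuous_const.mul Complex.continuous_ofReal).div_const 4)).mul
          (Complex.continuous_sinh.comp
            (Complex.continuous_ofReal.div_const ((γ:ℂ))))).continuousOn
      · intro t ht
        rw [denom_cast]
        exact Complex.ofReal_ne_zero.2 (Dre_pos γ hγ0 ht).ne'
  · exact Complex.continuous_ofReal.continuousOn
  · intro t ht
    exact Complex.ofReal_ne_zero.2 (ne_of_gt ht)

set_option maxHeartbeats 1000000 in
lemma upsilon_differentiableAt (γ : ℝ) (hγ0 : 0 < γ) (hγ2 : γ < 2) (z₀ : ℂ)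
    (Q δ r M t₀ μ0 c K K' : ℝ)
    (hQdef : Q = γ/2 + 2/γ)
    (hδ : 0 < δ) (hδ1 : δ ≤ z₀.re) (hδ2 : δ ≤ Q - z₀.re)
    (hrdef : r = δ/2)
    (hMdef : M = Complex.abs (((Q:ℝ):ℂ)/2 - z₀) + r)
    (ht₀pos : 0 < t₀) (ht₀1 : t₀ ≤ 1) (ht₀γ : t₀ ≤ γ) (ht₀M : t₀ ≤ 1/(M+1))
    (hμ0pos : 0 < μ0) (hμ01 : μ0 ≤ 1) (hμ0δ : μ0 ≤ δ/2)
    (hcdef : c = (1 - Real.exp (-(γ * t₀ / 2))) * (1 - Real.exp (-(2 * t₀ / γ))) / 4)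
    (hKdef : K = (M^2*(2+1/γ) + 3*M^3/2) * Real.exp (μ0*t₀) + M^2/t₀ + 1/(c*t₀))
    (hK'def : K' = (2*M + 2*M^2 + 2*M*(1+1/γ)) * Real.exp (μ0*t₀) + 2*M/t₀ + 1/c) :
    DifferentiableAt ℂ (Upsilon γ) z₀ := by
  have hr : 0 < r := by rw [hrdef]; exact half_pos hδ
  have hM : 0 < M := by
    rw [hMdef]; exact add_pos_of_nonneg_of_pos (Complex.abs.nonneg _) hr
  have hcpos : 0 < c := by rw [hcdef]; exact cpos γ t₀ hγ0 ht₀pos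
  -- facts about points in the ball
  have hzfacts : ∀ z ∈ Metric.ball z₀ r,
      Complex.abs (((Q:ℝ):ℂ)/2 - z) ≤ M ∧ |(((Q:ℝ):ℂ)/2 - z).re| ≤ Q/2 - δ/2 := by
    intro z hz
    have hd : Complex.abs (z - z₀) < r := by
      rw [Complex.abs_apply, ← Complex.dist_eq]; exact Metric.mem_ball.1 hz
    constructor
    · rw [show (((Q:ℝ):ℂ)/2 - z) = ((((Q:ℝ):ℂ)/2 - z₀) + (z₀ - z)) by ring]
      calc Complex.abs ((((Q:ℝ):ℂ)/2 - z₀) + (z₀ - z))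
          ≤ Complex.abs (((Q:ℝ):ℂ)/2 - z₀) + Complex.abs (z₀ - z) := Complex.abs.add_le _ _
        _ ≤ Complex.abs (((Q:ℝ):ℂ)/2 - z₀) + r := by
            have : Complex.abs (z₀ - z) = Complex.abs (z - z₀) := by
              rw [← Complex.abs.map_neg, neg_sub]
            rw [this]; linarith
        _ = M := hMdef.symm
    · have hre1 : |(z - z₀).re| ≤ Complex.abs (z - z₀) := Complex.abs_re_le_abs _
      rw [Complex.sub_re] at hre1
      have hre2 : |z.re - z₀.re| < r := lt_of_le_of_lt hre1 hd
      have habs := abs_lt.1 hre2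
      have hc0re : ((((Q:ℝ):ℂ))/2 - z).re = Q/2 - z.re := by
        rw [show (((Q:ℝ):ℂ))/2 = (((Q/2 : ℝ)):ℂ) by push_cast; ring]
        simp [Complex.sub_re]
      rw [hc0re, abs_le]
      rw [hrdef] at habs
      constructor
      · linarith [habs.2]
      · linarith [habs.1]
  -- pointwise bound for F
  have hbF : ∀ t ∈ Ioi (0:ℝ), ∀ z ∈ Metric.ball z₀ r,
      Complex.abs (((((Q:ℝ):ℂ)/2 - z) ^ 2 * Complex.exp (-(t:ℂ))
        - (Complex.sinh ((((Q:ℝ):ℂ)/2 - z) * t / 2)) ^ 2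
          / (Complex.sinh ((γ:ℂ) * t / 4) * Complex.sinh ((t:ℂ) / γ))) / (t:ℂ))
      ≤ K * Real.exp (-μ0 * t) := by
    intro t ht z hz
    obtain ⟨hαM, hαre⟩ := hzfacts z hz
    have htpos : 0 < t := ht
    rcases le_or_gt t t₀ with hcase | hcase
    · have htle1 : t ≤ 1 := le_trans hcase ht₀1
      have htγ : t ≤ γ := le_trans hcase ht₀γ
      have hMt : M * t ≤ 1 := by
        have h1 : M * t ≤ M * (1/(M+1)) :=
          mul_le_mul_of_nonneg_left (le_trans hcase ht₀M) hM.le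
        have h2 : M * (1/(M+1)) ≤ 1 := by
          rw [mul_one_div, div_le_one (by linarith)]; linarith
        linarith
      have hb := Fint_bound_small γ hγ0 hγ2 _ htpos htle1 htγ hαM hMt
      refine le_trans hb ?_
      have hC0 : 0 ≤ M^2*(2+1/γ) + 3*M^3/2 := by positivity
      have hexp1 : (1:ℝ) ≤ Real.exp (μ0*t₀) * Real.exp (-μ0*t) := by
        rw [← Real.exp_add]
        apply Real.one_le_exp
        nlinarith
      calc M^2*(2+1/γ) + 3*M^3/2 = (M^2*(2+1/γ) + 3*M^3/2) * 1 := (mul_one _).symm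
        _ ≤ (M^2*(2+1/γ) + 3*M^3/2) * (Real.exp (μ0*t₀) * Real.exp (-μ0*t)) :=
            mul_le_mul_of_nonneg_left hexp1 hC0
        _ = ((M^2*(2+1/γ) + 3*M^3/2) * Real.exp (μ0*t₀)) * Real.exp (-μ0*t) := by ring
        _ ≤ K * Real.exp (-μ0*t) := by
            apply mul_le_mul_of_nonneg_right _ (Real.exp_pos _).le
            rw [hKdef]
            have h1 : 0 ≤ M^2/t₀ := by positivity
            have h2 : 0 ≤ 1/(c*t₀) := by positivity
            linarith
    · have hb := Fint_bound_large γ hγ0 (A := Q/2 - δ/2) _ ht₀pos hcase.le hαM hαre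
      rw [← hcdef] at hb
      have hAe : (Q/2 - δ/2 - (γ/4 + 1/γ)) * t = -(δ/2)*t := by
        rw [hQdef]; ring
      rw [hAe] at hb
      refine le_trans hb ?_
      have he1 : Real.exp (-t) ≤ Real.exp (-μ0*t) := Real.exp_le_exp.2 (by nlinarith)
      have he2 : Real.exp (-(δ/2)*t) ≤ Real.exp (-μ0*t) := Real.exp_le_exp.2 (by nlinarith)
      have hCe : 0 ≤ (M^2*(2+1/γ) + 3*M^3/2) * Real.exp (μ0*t₀) := by positivity
      calc M ^ 2 * Real.exp (-t) / t₀ + Real.exp (-(δ/2)*t) / (c * t₀)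
          ≤ M ^ 2 * Real.exp (-μ0*t) / t₀ + Real.exp (-μ0*t) / (c * t₀) :=
            add_le_add ((div_le_div_iff_of_pos_right ht₀pos).2
                (mul_le_mul_of_nonneg_left he1 (by positivity)))
              ((div_le_div_iff_of_pos_right (by positivity)).2 he2)
        _ = (M^2/t₀ + 1/(c*t₀)) * Real.exp (-μ0*t) := by ring
        _ ≤ K * Real.exp (-μ0*t) := by
            apply mul_le_mul_of_nonneg_right _ (Real.exp_pos _).le
            rw [hKdef]; linarith
  -- pointwise bound for F'
  have hbF' : ∀ t ∈ Ioi (0:ℝ), ∀ z ∈ Metric.ball z₀ r,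
      Complex.abs ((-2 * (((Q:ℝ):ℂ)/2 - z) * Complex.exp (-(t:ℂ))
        + (t:ℂ) * Complex.sinh ((((Q:ℝ):ℂ)/2 - z) * t / 2)
            * Complex.cosh ((((Q:ℝ):ℂ)/2 - z) * t / 2)
          / (Complex.sinh ((γ:ℂ) * t / 4) * Complex.sinh ((t:ℂ) / γ))) / (t:ℂ))
      ≤ K' * Real.exp (-μ0 * t) := by
    intro t ht z hz
    obtain ⟨hαM, hαre⟩ := hzfacts z hz
    have htpos : 0 < t := ht
    rcases le_or_gt t t₀ with hcase | hcase
    · have htle1 : t ≤ 1 := le_trans hcase ht₀1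
      have htγ : t ≤ γ := le_trans hcase ht₀γ
      have hMt : M * t ≤ 1 := by
        have h1 : M * t ≤ M * (1/(M+1)) :=
          mul_le_mul_of_nonneg_left (le_trans hcase ht₀M) hM.le
        have h2 : M * (1/(M+1)) ≤ 1 := by
          rw [mul_one_div, div_le_one (by linarith)]; linarith
        linarith
      have hb := Fder_bound_small γ hγ0 hγ2 _ htpos htle1 htγ hαM hMt
      refine le_trans hb ?_
      have hC0 : 0 ≤ 2*M + 2*M^2 + 2*M*(1+1/γ) := by positivity
      have hexp1 : (1:ℝ) ≤ Real.exp (μ0*t₀) * Real.exp (-μ0*t) := by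
        rw [← Real.exp_add]
        apply Real.one_le_exp
        nlinarith
      calc 2*M + 2*M^2 + 2*M*(1+1/γ) = (2*M + 2*M^2 + 2*M*(1+1/γ)) * 1 := (mul_one _).symm
        _ ≤ (2*M + 2*M^2 + 2*M*(1+1/γ)) * (Real.exp (μ0*t₀) * Real.exp (-μ0*t)) :=
            mul_le_mul_of_nonneg_left hexp1 hC0
        _ = ((2*M + 2*M^2 + 2*M*(1+1/γ)) * Real.exp (μ0*t₀)) * Real.exp (-μ0*t) := by ring
        _ ≤ K' * Real.exp (-μ0*t) := by
            apply mul_le_mul_of_nonneg_right _ (Real.exp_pos _).le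
            rw [hK'def]
            have h1 : 0 ≤ 2*M/t₀ := by positivity
            have h2 : 0 ≤ 1/c := by positivity
            linarith
    · have hb := Fder_bound_large γ hγ0 (A := Q/2 - δ/2) _ ht₀pos hcase.le hαM hαre
      rw [← hcdef] at hb
      have hAe : (Q/2 - δ/2 - (γ/4 + 1/γ)) * t = -(δ/2)*t := by
        rw [hQdef]; ring
      rw [hAe] at hb
      refine le_trans hb ?_
      have he1 : Real.exp (-t) ≤ Real.exp (-μ0*t) := Real.exp_le_exp.2 (by nlinarith)
      have he2 : Real.exp (-(δ/2)*t) ≤ Real.exp (-μ0*t) := Real.exp_le_exp.2 (by nlinarith)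
      have hCe : 0 ≤ (2*M + 2*M^2 + 2*M*(1+1/γ)) * Real.exp (μ0*t₀) := by positivity
      calc 2 * M * Real.exp (-t) / t₀ + Real.exp (-(δ/2)*t) / c
          ≤ 2 * M * Real.exp (-μ0*t) / t₀ + Real.exp (-μ0*t) / c :=
            add_le_add ((div_le_div_iff_of_pos_right ht₀pos).2
                (mul_le_mul_of_nonneg_left he1 (by positivity)))
              ((div_le_div_iff_of_pos_right hcpos).2 he2)
        _ = (2*M/t₀ + 1/c) * Real.exp (-μ0*t) := by ring
        _ ≤ K' * Real.exp (-μ0*t) := by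
            apply mul_le_mul_of_nonneg_right _ (Real.exp_pos _).le
            rw [hK'def]; linarith
  -- derivative of the integrand
  have hderiv : ∀ t ∈ Ioi (0:ℝ), ∀ z ∈ Metric.ball z₀ r,
      HasDerivAt (fun z : ℂ => (((((Q:ℝ)):ℂ)/2 - z) ^ 2 * Complex.exp (-(t:ℂ))
        - (Complex.sinh (((((Q:ℝ)):ℂ)/2 - z) * t / 2)) ^ 2
          / (Complex.sinh ((γ:ℂ) * t / 4) * Complex.sinh ((t:ℂ) / γ))) / (t:ℂ))
      ((-2 * (((Q:ℝ):ℂ)/2 - z) * Complex.exp (-(t:ℂ))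
        + (t:ℂ) * Complex.sinh ((((Q:ℝ):ℂ)/2 - z) * t / 2)
            * Complex.cosh ((((Q:ℝ):ℂ)/2 - z) * t / 2)
          / (Complex.sinh ((γ:ℂ) * t / 4) * Complex.sinh ((t:ℂ) / γ))) / (t:ℂ)) z := by
    intro t ht z hz
    have h := (integrand_hasDerivAt γ Q (t := t) z).div_const ((t:ℝ):ℂ)
    refine h.congr_deriv ?_
    ring
  -- measure-theoretic packaging
  set μm : Measure ℝ := volume.restrict (Ioi 0) with hμm
  have hmeas : ∀ᶠ z in nhds z₀, AEStronglyMeasurable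
      (fun t : ℝ => (((((Q:ℝ)):ℂ)/2 - z) ^ 2 * Complex.exp (-(t:ℂ))
        - (Complex.sinh (((((Q:ℝ)):ℂ)/2 - z) * t / 2)) ^ 2
          / (Complex.sinh ((γ:ℂ) * t / 4) * Complex.sinh ((t:ℂ) / γ))) / (t:ℂ)) μm :=
    Filter.Eventually.of_forall fun z =>
      (cont_F γ Q hγ0 z).aestronglyMeasurable measurableSet_Ioi
  have hKint : Integrable (fun t : ℝ => K * Real.exp (-μ0 * t)) μm :=
    (exp_neg_integrableOn_Ioi 0 hμ0pos).const_mul K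
  have hK'int : Integrable (fun t : ℝ => K' * Real.exp (-μ0 * t)) μm :=
    (exp_neg_integrableOn_Ioi 0 hμ0pos).const_mul K'
  have hFint : Integrable (fun t : ℝ => (((((Q:ℝ)):ℂ)/2 - z₀) ^ 2 * Complex.exp (-(t:ℂ))
      - (Complex.sinh (((((Q:ℝ)):ℂ)/2 - z₀) * t / 2)) ^ 2
        / (Complex.sinh ((γ:ℂ) * t / 4) * Complex.sinh ((t:ℂ) / γ))) / (t:ℂ)) μm := by
    apply Integrable.mono' hKint
      ((cont_F γ Q hγ0 z₀).aestronglyMeasurable measurableSet_Ioi)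
    rw [hμm, ae_restrict_iff' measurableSet_Ioi]
    apply Filter.Eventually.of_forall
    intro t ht
    rw [Complex.norm_eq_abs]
    exact hbF t ht z₀ (Metric.mem_ball_self hr)
  have hF'meas : AEStronglyMeasurable
      (fun t : ℝ => (-2 * ((((Q:ℝ)):ℂ)/2 - z₀) * Complex.exp (-(t:ℂ))
        + (t:ℂ) * Complex.sinh (((((Q:ℝ)):ℂ)/2 - z₀) * t / 2)
            * Complex.cosh (((((Q:ℝ)):ℂ)/2 - z₀) * t / 2)
          / (Complex.sinh ((γ:ℂ) * t / 4) * Complex.sinh ((t:ℂ) / γ))) / (t:ℂ)) μm :=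
    (cont_F' γ Q hγ0 z₀).aestronglyMeasurable measurableSet_Ioi
  have hbound : ∀ᵐ (t : ℝ) ∂μm, ∀ z ∈ Metric.ball z₀ r,
      ‖(-2 * ((((Q:ℝ)):ℂ)/2 - z) * Complex.exp (-(t:ℂ))
        + (t:ℂ) * Complex.sinh (((((Q:ℝ)):ℂ)/2 - z) * t / 2)
            * Complex.cosh (((((Q:ℝ)):ℂ)/2 - z) * t / 2)
          / (Complex.sinh ((γ:ℂ) * t / 4) * Complex.sinh ((t:ℂ) / γ))) / (t:ℂ)‖
        ≤ K' * Real.exp (-μ0 * t) := by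
    rw [hμm, ae_restrict_iff' measurableSet_Ioi]
    apply Filter.Eventually.of_forall
    intro t ht z hz
    rw [Complex.norm_eq_abs]
    exact hbF' t ht z hz
  have hdiffae : ∀ᵐ (t : ℝ) ∂μm, ∀ z ∈ Metric.ball z₀ r,
      HasDerivAt (fun z : ℂ => (((((Q:ℝ)):ℂ)/2 - z) ^ 2 * Complex.exp (-(t:ℂ))
        - (Complex.sinh (((((Q:ℝ)):ℂ)/2 - z) * t / 2)) ^ 2
          / (Complex.sinh ((γ:ℂ) * t / 4) * Complex.sinh ((t:ℂ) / γ))) / (t:ℂ))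
      ((-2 * ((((Q:ℝ)):ℂ)/2 - z) * Complex.exp (-(t:ℂ))
        + (t:ℂ) * Complex.sinh (((((Q:ℝ)):ℂ)/2 - z) * t / 2)
            * Complex.cosh (((((Q:ℝ)):ℂ)/2 - z) * t / 2)
          / (Complex.sinh ((γ:ℂ) * t / 4) * Complex.sinh ((t:ℂ) / γ))) / (t:ℂ)) z := by
    rw [hμm, ae_restrict_iff' measurableSet_Ioi]
    apply Filter.Eventually.of_forall
    intro t ht z hz
    exact hderiv t ht z hz
  have key := hasDerivAt_integral_of_dominated_loc_of_deriv_le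
    (F := fun (z : ℂ) (t : ℝ) => (((((Q:ℝ)):ℂ)/2 - z) ^ 2 * Complex.exp (-(t:ℂ))
      - (Complex.sinh (((((Q:ℝ)):ℂ)/2 - z) * t / 2)) ^ 2
        / (Complex.sinh ((γ:ℂ) * t / 4) * Complex.sinh ((t:ℂ) / γ))) / (t:ℂ))
    (F' := fun (z : ℂ) (t : ℝ) => (-2 * ((((Q:ℝ)):ℂ)/2 - z) * Complex.exp (-(t:ℂ))
      + (t:ℂ) * Complex.sinh (((((Q:ℝ)):ℂ)/2 - z) * t / 2)
          * Complex.cosh (((((Q:ℝ)):ℂ)/2 - z) * t / 2)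
        / (Complex.sinh ((γ:ℂ) * t / 4) * Complex.sinh ((t:ℂ) / γ))) / (t:ℂ))
    (bound := fun t : ℝ => K' * Real.exp (-μ0 * t))
    (Metric.ball_mem_nhds z₀ hr) hmeas hFint hF'meas hbound hK'int hdiffae
  have hdint : DifferentiableAt ℂ
      (fun z : ℂ => ∫ t in Ioi (0:ℝ), (((((Q:ℝ)):ℂ)/2 - z) ^ 2 * Complex.exp (-(t:ℂ))
        - (Complex.sinh (((((Q:ℝ)):ℂ)/2 - z) * t / 2)) ^ 2
          / (Complex.sinh ((γ:ℂ) * t / 4) * Complex.sinh ((t:ℂ) / γ))) / (t:ℂ)) z₀ :=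
    key.2.differentiableAt
  subst hQdef
  exact hdint.cexp


/-- For every `γ ∈ (0,2)`, the function `Υ` is holomorphic on the open
strip `{z : 0 < Re z < Q}`, where `Q = γ/2 + 2/γ`. -/
theorem upsilon_differentiableOn (γ : ℝ) (hγ : γ ∈ Set.Ioo (0:ℝ) 2) :
    DifferentiableOn ℂ (Upsilon γ) {z : ℂ | 0 < z.re ∧ z.re < γ/2 + 2/γ} := by
  obtain ⟨hγ0, hγ2⟩ := hγ
  intro z₀ hz₀
  obtain ⟨h0, hQz⟩ := hz₀
  obtain ⟨δ, hδdef⟩ : ∃ δ : ℝ, δ = min z₀.re (γ/2 + 2/γ - z₀.re) := ⟨_, rfl⟩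
  obtain ⟨r, hrdef⟩ : ∃ r : ℝ, r = δ/2 := ⟨_, rfl⟩
  obtain ⟨M, hMdef⟩ : ∃ M : ℝ,
      M = Complex.abs ((((γ/2 + 2/γ : ℝ)):ℂ)/2 - z₀) + r := ⟨_, rfl⟩
  obtain ⟨t₀, ht₀def⟩ : ∃ t₀ : ℝ, t₀ = min 1 (min γ (1/(M+1))) := ⟨_, rfl⟩
  obtain ⟨μ0, hμ0def⟩ : ∃ μ0 : ℝ, μ0 = min 1 (δ/2) := ⟨_, rfl⟩
  have hδ : 0 < δ := by rw [hδdef]; exact lt_min h0 (by linarith)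
  have hδ1 : δ ≤ z₀.re := by rw [hδdef]; exact min_le_left _ _
  have hδ2 : δ ≤ γ/2 + 2/γ - z₀.re := by rw [hδdef]; exact min_le_right _ _
  have hM : 0 < M := by
    rw [hMdef]
    exact add_pos_of_nonneg_of_pos (Complex.abs.nonneg _) (by rw [hrdef]; exact half_pos hδ)
  have ht₀pos : 0 < t₀ := by
    rw [ht₀def]
    exact lt_min one_pos (lt_min hγ0 (one_div_pos.2 (by linarith)))
  have ht₀1 : t₀ ≤ 1 := by rw [ht₀def]; exact min_le_left _ _
  have ht₀γ : t₀ ≤ γ := by rw [ht₀def]; exact (min_le_right _ _).trans (min_le_left _ _)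
  have ht₀M : t₀ ≤ 1/(M+1) := by
    rw [ht₀def]; exact (min_le_right _ _).trans (min_le_right _ _)
  have hμ0pos : 0 < μ0 := by rw [hμ0def]; exact lt_min one_pos (half_pos hδ)
  have hμ01 : μ0 ≤ 1 := by rw [hμ0def]; exact min_le_left _ _
  have hμ0δ : μ0 ≤ δ/2 := by rw [hμ0def]; exact min_le_right _ _
  exact (upsilon_differentiableAt γ hγ0 hγ2 z₀ (γ/2+2/γ) δ r M t₀ μ0 _ _ _ rfl hδ hδ1 hδ2
    hrdef hMdef ht₀pos ht₀1 ht₀γ ht₀M hμ0pos hμ01 hμ0δ rfl rfl rfl).differentiableWithinAt
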